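/- arXiv:1912.10075 — 2 statements merged into one kernel-verified Lean document; each statement's English description precedes it below -/
import Mathlib

section
/- Let n ≥ 1, α ∈ (0,1), θ ≥ 2, C > 0, and let u : B_{1/2}(0)×(−1/4,0] → ℝ be continuous. Suppose that for every (x₀,t₀) ∈ B_{1/4}(0)×(−1/16,0] and every r ∈ (0,1/4] there exists a vector V = V(x₀,t₀,r) ∈ ℝⁿ such that |u(x,t) − u(x₀,t₀) − V·(x−x₀)| ≤ C r^{1+α} whenever |x−x₀| ≤ r and t₀ − r^θ ≤ t ≤ t₀. Then u is differentiable in the space variable at every point of B_{1/4}(0)×(−1/16,0], and there exists C′ = C′(n,α,θ,C) > 0 such that for all (x,t),(y,s) ∈ B_{1/4}(0)×(−1/16,0] one has |Du(x,t) − Du(y,s)| ≤ C′(|x−y|^α + |t−s|^{α/θ}). -/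
open Set Real RealInnerProductSpace

noncomputable section

/-- `ℝⁿ` with the Euclidean structure. -/
abbrev En (n : ℕ) : Type := EuclideanSpace ℝ (Fin n)

/-- The set `B_r(0) × (-s, 0] ⊂ ℝⁿ × ℝ`. -/
def hCyl (n : ℕ) (r s : ℝ) : Set (En n × ℝ) :=
  {z | ‖z.1‖ < r ∧ z.2 ∈ Set.Ioc (-s) (0 : ℝ)}

lemma norm_le_of_inner_test {n : ℕ} (hn : 1 ≤ n) (W : En n) {ρ A : ℝ} (hρ : 0 < ρ)
    (h : ∀ e : En n, ‖e‖ = ρ → |⟪W, e⟫| ≤ A) : ρ * ‖W‖ ≤ A := by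
  rcases eq_or_ne W 0 with rfl | hW
  · simpa using h (EuclideanSpace.single ⟨0, hn⟩ ρ)
      (by rw [EuclideanSpace.norm_single]; exact abs_of_pos hρ)
  · have hWn : 0 < ‖W‖ := norm_pos_iff.mpr hW
    have he : ‖(ρ / ‖W‖) • W‖ = ρ := by
      rw [norm_smul, Real.norm_eq_abs, abs_of_pos (by positivity), div_mul_cancel₀]
      exact hWn.ne'
    have := h _ he
    rw [real_inner_smul_right, real_inner_self_eq_norm_mul_norm] at this
    calc ρ * ‖W‖ = |ρ / ‖W‖ * (‖W‖ * ‖W‖)| := by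
          rw [abs_of_nonneg (by positivity), div_mul_eq_mul_div, mul_div_assoc,
            mul_div_cancel_left₀ _ hWn.ne']
      _ ≤ A := this


set_option maxHeartbeats 2000000 in
/-- **Characterization of functions with Hölder continuous spatial gradient.** If a continuous
`u : B_{1/2} × (-1/4, 0] → ℝ` admits at every `(x₀,t₀) ∈ B_{1/4} × (-1/16, 0]` and every
scale `r ∈ (0, 1/4]` a first-order approximation
`|u(x,t) - u(x₀,t₀) - V·(x-x₀)| ≤ C r^{1+α}` for `|x-x₀| ≤ r`, `t₀ - r^θ ≤ t ≤ t₀`, then `u`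
is spatially differentiable on `B_{1/4} × (-1/16, 0]` and its spatial gradient satisfies
`|Du(x,t) - Du(y,s)| ≤ C'(|x-y|^α + |t-s|^{α/θ})` there, with `C' = C'(n,α,θ,C) > 0`. -/
theorem holder_gradient_characterization
    (n : ℕ) (hn : 1 ≤ n) (α θ C : ℝ)
    (hα : α ∈ Set.Ioo (0 : ℝ) 1) (hθ : 2 ≤ θ) (hC : 0 < C)
    (u : En n × ℝ → ℝ)
    (hu : ContinuousOn u (hCyl n (1/2) (1/4)))
    (happ : ∀ z₀ ∈ hCyl n (1/4) (1/16), ∀ r ∈ Set.Ioc (0 : ℝ) (1/4),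
      ∃ V : En n, ∀ z : En n × ℝ,
        ‖z.1 - z₀.1‖ ≤ r → z₀.2 - r ^ θ ≤ z.2 → z.2 ≤ z₀.2 →
        |u z - u z₀ - ⟪V, z.1 - z₀.1⟫| ≤ C * r ^ (1 + α)) :
    ∃ Du : En n × ℝ → En n,
      (∀ z ∈ hCyl n (1/4) (1/16), HasGradientAt (fun x => u (x, z.2)) (Du z) z.1) ∧
      ∃ C' : ℝ, 0 < C' ∧
        ∀ z ∈ hCyl n (1/4) (1/16), ∀ w ∈ hCyl n (1/4) (1/16),
          ‖Du z - Du w‖ ≤ C' * (‖z.1 - w.1‖ ^ α + |z.2 - w.2| ^ (α / θ)) := by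
  set D := hCyl n (1/4) (1/16) with hD
  obtain ⟨hα0, hα1⟩ := hα
  -- choice of approximating vectors
  have happ' : ∀ (z₀ : En n × ℝ) (r : ℝ), ∃ V : En n,
      z₀ ∈ D → r ∈ Set.Ioc (0 : ℝ) (1/4) → ∀ z : En n × ℝ,
        ‖z.1 - z₀.1‖ ≤ r → z₀.2 - r ^ θ ≤ z.2 → z.2 ≤ z₀.2 →
        |u z - u z₀ - ⟪V, z.1 - z₀.1⟫| ≤ C * r ^ (1 + α) := by
    intro z₀ r
    by_cases h1 : z₀ ∈ D
    · by_cases h2 : r ∈ Set.Ioc (0 : ℝ) (1/4)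
      · obtain ⟨V, hV⟩ := happ z₀ h1 r h2
        exact ⟨V, fun _ _ => hV⟩
      · exact ⟨0, fun _ h => absurd h h2⟩
    · exact ⟨0, fun h => absurd h h1⟩
  choose V hV using happ'
  -- convenient form
  have happV : ∀ z₀ ∈ D, ∀ r : ℝ, 0 < r → r ≤ 1/4 → ∀ (ξ : En n) (τ : ℝ),
      ‖ξ - z₀.1‖ ≤ r → z₀.2 - r ^ θ ≤ τ → τ ≤ z₀.2 →
      |u (ξ, τ) - u z₀ - ⟪V z₀ r, ξ - z₀.1⟫| ≤ C * r ^ (1 + α) := by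
    intro z₀ hz₀ r hr hr4 ξ τ h1 h2 h3
    exact hV z₀ r hz₀ ⟨hr, hr4⟩ (ξ, τ) h1 h2 h3
  -- comparison of scales at the same point
  have hVcomp : ∀ z ∈ D, ∀ r s' : ℝ, 0 < s' → s' ≤ r → r ≤ 1/4 →
      ‖V z r - V z s'‖ ≤ 2 * C * r ^ (1 + α) / s' := by
    intro z hz r s' hs' hsr hr4
    have hr : 0 < r := lt_of_lt_of_le hs' hsr
    have key : ∀ e : En n, ‖e‖ = s' → |⟪V z r - V z s', e⟫| ≤ 2 * C * r ^ (1 + α) := by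
      intro e he
      have h1 := happV z hz r hr hr4 (z.1 + e) z.2
        (by rw [add_sub_cancel_left, he]; exact hsr)
        (sub_le_self _ (Real.rpow_nonneg hr.le θ)) le_rfl
      have h2 := happV z hz s' hs' (le_trans hsr hr4) (z.1 + e) z.2
        (by rw [add_sub_cancel_left, he])
        (sub_le_self _ (Real.rpow_nonneg hs'.le θ)) le_rfl
      rw [add_sub_cancel_left] at h1 h2
      have hle : C * s' ^ (1 + α) ≤ C * r ^ (1 + α) := by
        have := Real.rpow_le_rpow hs'.le hsr (by linarith : (0:ℝ) ≤ 1 + α)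
        nlinarith
      have hid : ⟪V z r - V z s', e⟫ =
          (u (z.1 + e, z.2) - u z - ⟪V z s', e⟫) -
          (u (z.1 + e, z.2) - u z - ⟪V z r, e⟫) := by
        rw [inner_sub_left]; ring
      rw [hid]
      calc |(u (z.1 + e, z.2) - u z - ⟪V z s', e⟫) -
          (u (z.1 + e, z.2) - u z - ⟪V z r, e⟫)|
          ≤ |u (z.1 + e, z.2) - u z - ⟪V z s', e⟫| +
            |u (z.1 + e, z.2) - u z - ⟪V z r, e⟫| := abs_sub _ _
        _ ≤ C * s' ^ (1 + α) + C * r ^ (1 + α) := add_le_add h2 h1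
        _ ≤ 2 * C * r ^ (1 + α) := by linarith
    have hnt := norm_le_of_inner_test hn (V z r - V z s') hs' key
    rw [le_div_iff₀ hs']
    calc ‖V z r - V z s'‖ * s' = s' * ‖V z r - V z s'‖ := mul_comm _ _
      _ ≤ 2 * C * r ^ (1 + α) := hnt
  -- comparison between nearby points at the same scale
  have hVcross : ∀ z ∈ D, ∀ w ∈ D, ∀ r : ℝ, 0 < r → r ≤ 1/4 → w.2 ≤ z.2 →
      z.2 - w.2 ≤ r ^ θ → ‖z.1 - w.1‖ ≤ r / 2 →
      ‖V z r - V w r‖ ≤ 6 * C * r ^ α := by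
    intro z hz w hw r hr hr4 hwz hts hsp
    have key : ∀ e : En n, ‖e‖ = r / 2 → |⟪V z r - V w r, e⟫| ≤ 3 * C * r ^ (1 + α) := by
      intro e he
      -- three applications of the approximation property
      have h1 := happV z hz r hr hr4 (w.1 + e) w.2
        (by
          have : w.1 + e - z.1 = e + (w.1 - z.1) := by abel
          rw [this]
          calc ‖e + (w.1 - z.1)‖ ≤ ‖e‖ + ‖w.1 - z.1‖ := norm_add_le _ _
            _ ≤ r / 2 + r / 2 := by rw [he, norm_sub_rev w.1]; gcongr
            _ = r := by ring)
        (by linarith) hwz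
      have h2 := happV z hz r hr hr4 w.1 w.2
        (by rw [norm_sub_rev] at hsp; linarith) (by linarith) hwz
      have h3 := happV w hw r hr hr4 (w.1 + e) w.2
        (by rw [add_sub_cancel_left, he]; linarith)
        (sub_le_self _ (Real.rpow_nonneg hr.le θ)) le_rfl
      rw [add_sub_cancel_left] at h3
      simp only [Prod.mk.eta] at h2 h3
      have hsplit : ⟪V z r, w.1 + e - z.1⟫ = ⟪V z r, e⟫ + ⟪V z r, w.1 - z.1⟫ := by
        have : w.1 + e - z.1 = e + (w.1 - z.1) := by abel
        rw [this, inner_add_right]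
      rw [hsplit] at h1
      have hid : ⟪V z r - V w r, e⟫ =
          -(u (w.1 + e, w.2) - u z - (⟪V z r, e⟫ + ⟪V z r, w.1 - z.1⟫)) +
          (u w - u z - ⟪V z r, w.1 - z.1⟫) +
          (u (w.1 + e, w.2) - u w - ⟪V w r, e⟫) := by
        rw [inner_sub_left]; ring
      rw [hid]
      calc |(-(u (w.1 + e, w.2) - u z - (⟪V z r, e⟫ + ⟪V z r, w.1 - z.1⟫)) +
          (u w - u z - ⟪V z r, w.1 - z.1⟫)) +
          (u (w.1 + e, w.2) - u w - ⟪V w r, e⟫)|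
          ≤ |(-(u (w.1 + e, w.2) - u z - (⟪V z r, e⟫ + ⟪V z r, w.1 - z.1⟫)) +
              (u w - u z - ⟪V z r, w.1 - z.1⟫))| +
            |u (w.1 + e, w.2) - u w - ⟪V w r, e⟫| := abs_add_le _ _
        _ ≤ (|(-(u (w.1 + e, w.2) - u z - (⟪V z r, e⟫ + ⟪V z r, w.1 - z.1⟫)))| +
            |u w - u z - ⟪V z r, w.1 - z.1⟫|) +
            |u (w.1 + e, w.2) - u w - ⟪V w r, e⟫| := by gcongr; exact abs_add_le _ _
        _ ≤ (C * r ^ (1 + α) + C * r ^ (1 + α)) + C * r ^ (1 + α) := by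
            rw [abs_neg]
            exact add_le_add (add_le_add h1 h2) h3
        _ = 3 * C * r ^ (1 + α) := by ring
    have hnt := norm_le_of_inner_test hn (V z r - V w r) (by linarith : (0:ℝ) < r / 2) key
    have hr1α : r ^ (1 + α) = r * r ^ α := by
      rw [Real.rpow_add hr, Real.rpow_one]
    rw [hr1α] at hnt
    have hrα : 0 ≤ r ^ α := Real.rpow_nonneg hr.le α
    nlinarith
  -- the dyadic sequence of scales
  set sk : ℕ → ℝ := fun k => (1/4) * (1/2) ^ k with hsk
  have hsk_pos : ∀ k, 0 < sk k := fun k => by positivity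
  have hsk_le : ∀ k, sk k ≤ 1/4 := by
    intro k
    have : (1/2:ℝ) ^ k ≤ 1 := pow_le_one₀ (by norm_num) (by norm_num)
    rw [hsk]; nlinarith
  set q : ℝ := (1/2 : ℝ) ^ α with hq
  have hq0 : 0 < q := Real.rpow_pos_of_pos (by norm_num) _
  have hq1 : q < 1 := Real.rpow_lt_one (by norm_num) (by norm_num) hα0
  have hskq : ∀ k, (sk k) ^ α = (1/4 : ℝ) ^ α * q ^ k := by
    intro k
    rw [hsk, Real.mul_rpow (by norm_num) (by positivity), hq,
      ← Real.rpow_natCast ((1/2:ℝ)) k, ← Real.rpow_natCast ((1/2:ℝ)^α) k,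
      ← Real.rpow_mul (by norm_num), ← Real.rpow_mul (by norm_num), mul_comm (k:ℝ) α, mul_comm]
  -- geometric bound for consecutive scales
  have hsk_half : ∀ k, sk (k+1) = sk k / 2 := by
    intro k; rw [hsk]; simp only [pow_succ]; ring
  have hgeo : ∀ z ∈ D, ∀ k, dist (V z (sk k)) (V z (sk (k+1))) ≤ (4 * C * (1/4:ℝ)^α) * q ^ k := by
    intro z hz k
    have h1 := hVcomp z hz (sk k) (sk (k+1)) (hsk_pos _)
      (by rw [hsk_half]; linarith [hsk_pos k]) (hsk_le k)
    rw [dist_eq_norm]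
    have h2 : (sk k) ^ (1+α) = sk k * (sk k) ^ α := by
      rw [Real.rpow_add (hsk_pos k), Real.rpow_one]
    have h0 : sk k ≠ 0 := (hsk_pos k).ne'
    calc ‖V z (sk k) - V z (sk (k+1))‖ ≤ 2 * C * (sk k) ^ (1+α) / (sk (k+1)) := h1
      _ = 4 * C * (1/4:ℝ)^α * q ^ k := by
          rw [hsk_half, h2, hskq k]; field_simp; ring
  set g : En n × ℝ → En n := fun z => Filter.limUnder Filter.atTop (fun k => V z (sk k)) with hg
  have hgtendsto : ∀ z ∈ D, Filter.Tendsto (fun k => V z (sk k)) Filter.atTop (nhds (g z)) := by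
    intro z hz
    exact (cauchySeq_of_le_geometric q _ hq1 (hgeo z hz)).tendsto_limUnder
  have hgsk : ∀ z ∈ D, ∀ k, ‖g z - V z (sk k)‖ ≤ 4 * C * (sk k) ^ α / (1 - q) := by
    intro z hz k
    have := dist_le_of_le_geometric_of_tendsto q _ hq1 (hgeo z hz) (hgtendsto z hz) k
    rw [dist_comm, dist_eq_norm] at this
    calc ‖g z - V z (sk k)‖ ≤ 4 * C * (1/4:ℝ)^α * q ^ k / (1 - q) := this
      _ = 4 * C * (sk k) ^ α / (1 - q) := by rw [hskq k]; ring
  set K : ℝ := 4 + 4 / (1 - q) with hK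
  have hKpos : 0 < K := by
    have : 0 < 1 - q := by linarith
    positivity
  -- main estimate relating g to V at every scale
  have hgV : ∀ z ∈ D, ∀ r : ℝ, 0 < r → r ≤ 1/4 → ‖g z - V z r‖ ≤ K * C * r ^ α := by
    intro z hz r hr hr4
    have hex : ∃ k, sk k ≤ r := by
      obtain ⟨k, hk⟩ := exists_pow_lt_of_lt_one hr (by norm_num : (1/2:ℝ) < 1)
      refine ⟨k, ?_⟩
      have : (0:ℝ) < (1/2)^k := by positivity
      rw [hsk]; dsimp only; nlinarith
    classical
    set k := Nat.find hex with hkdef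
    have hk1 : sk k ≤ r := Nat.find_spec hex
    have hk2 : r / 2 ≤ sk k := by
      rcases Nat.eq_zero_or_pos k with h0 | h0
      · have : sk 0 = 1/4 := by rw [hsk]; norm_num
        rw [h0, this]; linarith
      · have hmin : ¬ sk (k-1) ≤ r := Nat.find_min hex (Nat.sub_lt h0 one_pos)
        push_neg at hmin
        have : sk ((k-1)+1) = sk (k-1) / 2 := hsk_half _
        rw [Nat.sub_add_cancel h0] at this
        rw [this]; linarith
    have hskpos := hsk_pos k
    have hb1 : ‖g z - V z (sk k)‖ ≤ 4 * C * (sk k) ^ α / (1 - q) := hgsk z hz k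
    have hb2 : ‖V z (sk k) - V z r‖ ≤ 2 * C * r ^ (1+α) / (sk k) := by
      rw [norm_sub_rev]; exact hVcomp z hz r (sk k) hskpos hk1 hr4
    have hq1' : 0 < 1 - q := by linarith
    have hskα : (sk k) ^ α ≤ r ^ α := Real.rpow_le_rpow hskpos.le hk1 hα0.le
    have hrα : (0:ℝ) ≤ r ^ α := Real.rpow_nonneg hr.le α
    have hr1α : r ^ (1+α) = r * r ^ α := by rw [Real.rpow_add hr, Real.rpow_one]
    have hbb2 : ‖V z (sk k) - V z r‖ ≤ 4 * C * r ^ α := by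
      calc ‖V z (sk k) - V z r‖ ≤ 2 * C * r ^ (1+α) / (sk k) := hb2
        _ ≤ 2 * C * r ^ (1+α) / (r/2) := by
            apply div_le_div_of_nonneg_left _ (by linarith) hk2
            positivity
        _ = 4 * C * r ^ α := by rw [hr1α]; field_simp; ring
    calc ‖g z - V z r‖ ≤ ‖g z - V z (sk k)‖ + ‖V z (sk k) - V z r‖ := by
          have := norm_sub_le_norm_sub_add_norm_sub (g z) (V z (sk k)) (V z r)
          linarith [dist_triangle (g z) (V z (sk k)) (V z r)]
      _ ≤ 4 * C * (sk k) ^ α / (1 - q) + 4 * C * r ^ α := add_le_add hb1 hbb2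
      _ ≤ 4 * C * r ^ α / (1 - q) + 4 * C * r ^ α := by gcongr
      _ = K * C * r ^ α := by rw [hK]; field_simp; ring
  -- differentiability
  have hdiff : ∀ z ∈ D, HasGradientAt (fun x => u (x, z.2)) (g z) z.1 := by
    intro z hz
    rw [hasGradientAt_iff_isLittleO, Asymptotics.isLittleO_iff]
    intro c hc
    have hKC : (0:ℝ) < (K + 1) * C := by positivity
    set δ : ℝ := min (1/4) ((c / ((K + 1) * C)) ^ (1/α)) with hδ
    have hδpos : 0 < δ := lt_min (by norm_num) (Real.rpow_pos_of_pos (by positivity) _)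
    filter_upwards [Metric.ball_mem_nhds z.1 hδpos] with x hx
    rcases eq_or_ne x z.1 with rfl | hne
    · simp [Prod.mk.eta]
    have hr0 : 0 < ‖x - z.1‖ := by
      rw [norm_pos_iff]; exact sub_ne_zero_of_ne hne
    set r : ℝ := ‖x - z.1‖ with hrdef
    have hrδ : r < δ := by
      rw [hrdef, ← dist_eq_norm]; exact Metric.mem_ball.mp hx
    have hr4 : r ≤ 1/4 := le_trans hrδ.le (min_le_left _ _)
    have h1 := happV z hz r hr0 hr4 x z.2 le_rfl
      (sub_le_self _ (Real.rpow_nonneg hr0.le θ)) le_rfl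
    have h2 : |⟪g z - V z r, x - z.1⟫| ≤ K * C * r ^ α * r := by
      calc |⟪g z - V z r, x - z.1⟫| ≤ ‖g z - V z r‖ * ‖x - z.1‖ := abs_real_inner_le_norm _ _
        _ ≤ K * C * r ^ α * r := by
            rw [← hrdef]
            exact mul_le_mul_of_nonneg_right (hgV z hz r hr0 hr4) hr0.le
    have hid : u (x, z.2) - u z - ⟪g z, x - z.1⟫ =
        (u (x, z.2) - u z - ⟪V z r, x - z.1⟫) - ⟪g z - V z r, x - z.1⟫ := by
      rw [inner_sub_left]; ring
    have hr1α : r ^ (1+α) = r ^ α * r := by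
      rw [Real.rpow_add hr0, Real.rpow_one]; ring
    have hbound : |u (x, z.2) - u z - ⟪g z, x - z.1⟫| ≤ (K + 1) * C * r ^ α * r := by
      rw [hid]
      calc |(u (x, z.2) - u z - ⟪V z r, x - z.1⟫) - ⟪g z - V z r, x - z.1⟫|
          ≤ |u (x, z.2) - u z - ⟪V z r, x - z.1⟫| + |⟪g z - V z r, x - z.1⟫| := abs_sub _ _
        _ ≤ C * r ^ (1 + α) + K * C * r ^ α * r := add_le_add h1 h2
        _ = (K + 1) * C * r ^ α * r := by rw [hr1α]; ring
    have hrαc : (K + 1) * C * r ^ α ≤ c := by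
      have hrδ2 : r ≤ (c / ((K + 1) * C)) ^ (1/α) := le_trans hrδ.le (min_le_right _ _)
      have : r ^ α ≤ ((c / ((K + 1) * C)) ^ (1/α)) ^ α :=
        Real.rpow_le_rpow hr0.le hrδ2 hα0.le
      rw [← Real.rpow_mul (by positivity) (1/α) α, one_div,
        inv_mul_cancel₀ hα0.ne', Real.rpow_one] at this
      rw [← le_div_iff₀' hKC]
      exact this
    have hfin : |u (x, z.2) - u z - ⟪g z, x - z.1⟫| ≤ c * r := by
      calc |u (x, z.2) - u z - ⟪g z, x - z.1⟫| ≤ (K + 1) * C * r ^ α * r := hbound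
        _ ≤ c * r := mul_le_mul_of_nonneg_right hrαc hr0.le
    simpa [Real.norm_eq_abs, Prod.mk.eta, hrdef] using hfin
  -- single-scale Hölder bound for g
  have hcross : ∀ z ∈ D, ∀ w ∈ D, ∀ r : ℝ, 0 < r → r ≤ 1/4 → w.2 ≤ z.2 →
      z.2 - w.2 ≤ r ^ θ → ‖z.1 - w.1‖ ≤ r / 2 →
      ‖g z - g w‖ ≤ (2 * K + 6) * C * r ^ α := by
    intro z hz w hw r hr hr4 hwz hts hsp
    calc ‖g z - g w‖ ≤ ‖g z - V z r‖ + ‖V z r - V w r‖ + ‖V w r - g w‖ := by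
          have := dist_triangle4 (g z) (V z r) (V w r) (g w)
          simpa [dist_eq_norm] using this
      _ ≤ K * C * r ^ α + 6 * C * r ^ α + K * C * r ^ α := by
          gcongr
          · exact hgV z hz r hr hr4
          · exact hVcross z hz w hw r hr hr4 hwz hts hsp
          · rw [norm_sub_rev]; exact hgV w hw r hr hr4
      _ = (2 * K + 6) * C * r ^ α := by ring
  set hstep : ℝ := (1/4 : ℝ) ^ θ with hhstep
  have hstep_pos : 0 < hstep := Real.rpow_pos_of_pos (by norm_num) _
  set M₀ : ℝ := (2 * K + 6) * C with hM₀
  have hM₀pos : 0 < M₀ := by positivity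
  -- one chain step
  have honestep : ∀ z ∈ D, ∀ w ∈ D, w.2 ≤ z.2 → z.2 - w.2 ≤ hstep →
      ‖z.1 - w.1‖ ≤ 1/8 → ‖g z - g w‖ ≤ M₀ := by
    intro z hz w hw h1 h2 h3
    have := hcross z hz w hw (1/4) (by norm_num) le_rfl h1 h2 (by linarith)
    have h4 : ((1:ℝ)/4) ^ α ≤ 1 := Real.rpow_le_one (by norm_num) (by norm_num) hα0.le
    calc ‖g z - g w‖ ≤ (2*K+6) * C * (1/4:ℝ)^α := this
      _ ≤ M₀ * 1 := by rw [hM₀]; gcongr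
      _ = M₀ := mul_one _
  set m₀ : ℕ := ⌈(1/16 : ℝ) / hstep⌉₊ with hm₀
  have hm₀pos : 0 < m₀ := Nat.ceil_pos.mpr (by positivity)
  -- global bound
  have hmemD : ∀ p : En n × ℝ, p ∈ D ↔ ‖p.1‖ < 1/4 ∧ -(1/16) < p.2 ∧ p.2 ≤ 0 := fun p => Iff.rfl
  have hglobal : ∀ z ∈ D, ∀ w ∈ D, w.2 ≤ z.2 → ‖g z - g w‖ ≤ (4 + m₀) * M₀ := by
    intro z hz w hw hwz
    obtain ⟨hz1, hz2, hz3⟩ := (hmemD z).mp hz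
    obtain ⟨hw1, hw2, hw3⟩ := (hmemD w).mp hw
    -- spatial chain
    set p : ℕ → En n × ℝ := fun i => (z.1 + ((i:ℝ)/4) • (w.1 - z.1), z.2) with hp
    have hp0 : p 0 = z := by
      rw [hp]; dsimp only; norm_num
    have hp4 : p 4 = (w.1, z.2) := by
      rw [hp]; dsimp only; norm_num
    have hpmem : ∀ i ≤ 4, p i ∈ D := by
      intro i hi
      rw [hmemD]
      refine ⟨?_, hz2, hz3⟩
      simp only [hp]
      set c : ℝ := (i:ℝ)/4 with hc
      have hc0 : 0 ≤ c := by positivity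
      have hc1 : c ≤ 1 := by
        rw [hc]; rw [div_le_one (by norm_num)]
        exact_mod_cast hi
      have hrw : z.1 + c • (w.1 - z.1) = (1 - c) • z.1 + c • w.1 := by
        rw [smul_sub, sub_smul, one_smul]; abel
      rw [hrw]
      calc ‖(1 - c) • z.1 + c • w.1‖ ≤ ‖(1 - c) • z.1‖ + ‖c • w.1‖ := norm_add_le _ _
        _ = (1 - c) * ‖z.1‖ + c * ‖w.1‖ := by
            rw [norm_smul, norm_smul, Real.norm_eq_abs, Real.norm_eq_abs,
              abs_of_nonneg (by linarith), abs_of_nonneg hc0]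
        _ ≤ max ‖z.1‖ ‖w.1‖ := by
            nlinarith [mul_nonneg (by linarith : (0:ℝ) ≤ 1 - c)
                (sub_nonneg.mpr (le_max_left ‖z.1‖ ‖w.1‖)),
              mul_nonneg hc0 (sub_nonneg.mpr (le_max_right ‖z.1‖ ‖w.1‖))]
        _ < 1/4 := max_lt hz1 hw1
    have hchainA : dist (g z) (g (w.1, z.2)) ≤ 4 * M₀ := by
      have hsum := dist_le_range_sum_dist (fun i => g (p i)) 4
      have hterm : ∀ i < 4, dist (g (p i)) (g (p (i+1))) ≤ M₀ := by
        intro i hi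
        rw [dist_eq_norm]
        apply honestep (p i) (hpmem i (by omega)) (p (i+1)) (hpmem (i+1) (by omega))
          le_rfl (by simp [hp, hstep_pos.le])
        simp only [hp]
        have hdd : z.1 + ((i:ℝ)/4) • (w.1 - z.1) - (z.1 + (((i:ℝ)+1)/4) • (w.1 - z.1))
            = (-(1/4) : ℝ) • (w.1 - z.1) := by
          module
        push_cast
        rw [hdd, norm_smul, Real.norm_eq_abs]
        have : ‖w.1 - z.1‖ ≤ 1/2 := by
          calc ‖w.1 - z.1‖ ≤ ‖w.1‖ + ‖z.1‖ := norm_sub_le _ _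
            _ ≤ 1/2 := by linarith
        rw [abs_neg, abs_of_nonneg (by norm_num : (0:ℝ) ≤ 1/4)]
        linarith
      calc dist (g z) (g (w.1, z.2)) = dist (g (p 0)) (g (p 4)) := by rw [hp0, hp4]
        _ ≤ ∑ i ∈ Finset.range 4, dist (g (p i)) (g (p (i+1))) := hsum
        _ ≤ ∑ _i ∈ Finset.range 4, M₀ :=
            Finset.sum_le_sum (fun i hi => hterm i (Finset.mem_range.mp hi))
        _ = 4 * M₀ := by rw [Finset.sum_const, Finset.card_range, nsmul_eq_mul]; norm_num
    -- time chain
    have hm₀R : (0:ℝ) < (m₀:ℝ) := by exact_mod_cast hm₀pos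
    have hτ16 : z.2 - w.2 < 1/16 := by linarith
    have hτ0 : 0 ≤ z.2 - w.2 := by linarith
    have hstepbound : (z.2 - w.2) / (m₀:ℝ) ≤ hstep := by
      have h1 : (1/16 : ℝ) / hstep ≤ (m₀:ℝ) := Nat.le_ceil _
      rw [div_le_iff₀ hm₀R]
      rw [div_le_iff₀ hstep_pos] at h1
      nlinarith
    set pt : ℕ → En n × ℝ := fun i => (w.1, z.2 - (i:ℝ)/(m₀:ℝ) * (z.2 - w.2)) with hpt
    have hpt0 : pt 0 = (w.1, z.2) := by rw [hpt]; dsimp only; norm_num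
    have hptm : pt m₀ = w := by
      rw [hpt]; dsimp only
      rw [div_self hm₀R.ne']
      norm_num
    have hptmem : ∀ i ≤ m₀, pt i ∈ D := by
      intro i hi
      rw [hmemD]
      have hc0 : 0 ≤ (i:ℝ)/(m₀:ℝ) := by positivity
      have hc1 : (i:ℝ)/(m₀:ℝ) ≤ 1 := by
        rw [div_le_one hm₀R]; exact_mod_cast hi
      refine ⟨hw1, ?_, ?_⟩ <;> simp only [hpt] <;> nlinarith
    have hchainB : dist (g (w.1, z.2)) (g w) ≤ (m₀:ℝ) * M₀ := by
      have hsum := dist_le_range_sum_dist (fun i => g (pt i)) m₀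
      have hterm : ∀ i < m₀, dist (g (pt i)) (g (pt (i+1))) ≤ M₀ := by
        intro i hi
        rw [dist_eq_norm]
        have hdiff2 : (pt i).2 - (pt (i+1)).2 = (z.2 - w.2) / (m₀:ℝ) := by
          simp only [hpt]; push_cast; field_simp; ring
        apply honestep (pt i) (hptmem i (by omega)) (pt (i+1)) (hptmem (i+1) (by omega))
        · have : 0 ≤ (pt i).2 - (pt (i+1)).2 := by rw [hdiff2]; positivity
          linarith
        · rw [hdiff2]; exact hstepbound
        · simp only [hpt]; simp
      calc dist (g (w.1, z.2)) (g w) = dist (g (pt 0)) (g (pt m₀)) := by rw [hpt0, hptm]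
        _ ≤ ∑ i ∈ Finset.range m₀, dist (g (pt i)) (g (pt (i+1))) := hsum
        _ ≤ ∑ _i ∈ Finset.range m₀, M₀ :=
            Finset.sum_le_sum (fun i hi => hterm i (Finset.mem_range.mp hi))
        _ = (m₀:ℝ) * M₀ := by rw [Finset.sum_const, Finset.card_range, nsmul_eq_mul]
    calc ‖g z - g w‖ = dist (g z) (g w) := (dist_eq_norm _ _).symm
      _ ≤ dist (g z) (g (w.1, z.2)) + dist (g (w.1, z.2)) (g w) := dist_triangle _ _ _
      _ ≤ 4 * M₀ + (m₀:ℝ) * M₀ := add_le_add hchainA hchainB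
      _ = (4 + m₀) * M₀ := by ring
  set C' : ℝ := 2 * (2 * K + 6) * C + 8 * (4 + m₀) * M₀ with hC'
  have hC'pos : 0 < C' := by positivity
  -- main Hölder estimate (ordered version)
  have hθ0 : (0:ℝ) < θ := by linarith
  have hmain : ∀ z ∈ D, ∀ w ∈ D, w.2 ≤ z.2 →
      ‖g z - g w‖ ≤ C' * (‖z.1 - w.1‖ ^ α + |z.2 - w.2| ^ (α / θ)) := by
    intro z hz w hw hwz
    set d : ℝ := ‖z.1 - w.1‖ with hd
    set τ : ℝ := z.2 - w.2 with hτdef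
    have hτ0 : (0:ℝ) ≤ τ := by rw [hτdef]; linarith
    have habs : |τ| = τ := abs_of_nonneg hτ0
    rw [habs]
    have hd0 : (0:ℝ) ≤ d := norm_nonneg _
    have hdα0 : (0:ℝ) ≤ d ^ α := Real.rpow_nonneg hd0 _
    have hτα0 : (0:ℝ) ≤ τ ^ (α/θ) := Real.rpow_nonneg hτ0 _
    have hrhs0 : (0:ℝ) ≤ d ^ α + τ ^ (α/θ) := by linarith
    by_cases hzw : z = w
    · subst hzw
      simp only [sub_self, norm_zero]
      positivity
    by_cases hnear : 2*d ≤ 1/4 ∧ τ ≤ hstep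
    · obtain ⟨hn1, hn2⟩ := hnear
      set r : ℝ := max (2*d) (τ ^ (1/θ)) with hrdef
      have hr0 : 0 < r := by
        rcases eq_or_lt_of_le hd0 with h0 | h0
        · have hz1w : z.1 = w.1 := by
            have : z.1 - w.1 = 0 := norm_eq_zero.mp (by rw [← hd]; exact h0.symm)
            exact sub_eq_zero.mp this
          have hτpos : 0 < τ := by
            rcases eq_or_lt_of_le hτ0 with h1 | h1
            · exfalso
              apply hzw
              have h2 : z.2 = w.2 := by
                have := h1.symm
                rw [hτdef] at this
                linarith
              exact Prod.ext_iff.mpr ⟨hz1w, h2⟩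
            · exact h1
          exact lt_max_of_lt_right (Real.rpow_pos_of_pos hτpos _)
        · exact lt_max_of_lt_left (by linarith)
      have hr4 : r ≤ 1/4 := by
        apply max_le hn1
        calc τ ^ (1/θ) ≤ hstep ^ (1/θ) := Real.rpow_le_rpow hτ0 hn2 (by positivity)
          _ = 1/4 := by
              rw [hhstep, ← Real.rpow_mul (by norm_num), mul_one_div,
                div_self hθ0.ne', Real.rpow_one]
      have htime : τ ≤ r ^ θ := by
        calc τ = (τ ^ (1/θ)) ^ θ := by
              rw [← Real.rpow_mul hτ0, one_div, inv_mul_cancel₀ hθ0.ne', Real.rpow_one]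
          _ ≤ r ^ θ := Real.rpow_le_rpow (by positivity) (le_max_right _ _) hθ0.le
      have hsp : d ≤ r/2 := by
        have := le_max_left (2*d) (τ^(1/θ))
        rw [← hrdef] at this
        linarith
      have hcr := hcross z hz w hw r hr0 hr4 hwz (by rw [← hτdef]; exact htime)
        (by rw [← hd]; exact hsp)
      have hrα : r ^ α ≤ 2 * d ^ α + τ ^ (α/θ) := by
        rcases max_cases (2*d) (τ^(1/θ)) with ⟨heq, _⟩ | ⟨heq, _⟩
        · rw [hrdef, heq, Real.mul_rpow (by norm_num) hd0]
          have h2α : (2:ℝ)^α ≤ 2 := by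
            calc (2:ℝ)^α ≤ (2:ℝ)^(1:ℝ) :=
                  Real.rpow_le_rpow_of_exponent_le (by norm_num) hα1.le
              _ = 2 := Real.rpow_one 2
          nlinarith
        · rw [hrdef, heq, ← Real.rpow_mul hτ0]
          have hexp : (1/θ)*α = α/θ := by ring
          rw [hexp]
          linarith
      calc ‖g z - g w‖ ≤ (2*K+6)*C * r^α := hcr
        _ ≤ (2*K+6)*C * (2*d^α + τ^(α/θ)) :=
            mul_le_mul_of_nonneg_left hrα (by positivity)
        _ ≤ C' * (d^α + τ^(α/θ)) := by
            rw [hC']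
            have h3 : (0:ℝ) ≤ 8*(4+(m₀:ℝ))*M₀ := by positivity
            have h4 : (0:ℝ) ≤ (2*K+6)*C := by positivity
            nlinarith [mul_nonneg h3 hrhs0, mul_nonneg h4 hτα0]
    · push_neg at hnear
      have hlow : (1/8:ℝ) ≤ d ^ α + τ ^ (α/θ) := by
        by_cases hd4 : 2*d ≤ 1/4
        · have hτs : hstep < τ := hnear hd4
          have hτb : (1/4:ℝ)^α ≤ τ ^ (α/θ) := by
            calc (1/4:ℝ)^α = hstep ^ (α/θ) := by
                  rw [hhstep, ← Real.rpow_mul (by norm_num)]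
                  congr 1
                  field_simp
              _ ≤ τ ^ (α/θ) := Real.rpow_le_rpow hstep_pos.le hτs.le (by positivity)
          have h4 : (1/4:ℝ) ≤ (1/4:ℝ)^α := by
            calc (1/4:ℝ) = (1/4:ℝ)^(1:ℝ) := (Real.rpow_one _).symm
              _ ≤ (1/4:ℝ)^α := Real.rpow_le_rpow_of_exponent_ge (by norm_num) (by norm_num) hα1.le
          linarith
        · push_neg at hd4
          have h8 : (1/8:ℝ) ≤ d := by linarith
          have hdb : (1/8:ℝ)^α ≤ d^α := Real.rpow_le_rpow (by norm_num) h8 hα0.le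
          have h4 : (1/8:ℝ) ≤ (1/8:ℝ)^α := by
            calc (1/8:ℝ) = (1/8:ℝ)^(1:ℝ) := (Real.rpow_one _).symm
              _ ≤ (1/8:ℝ)^α := Real.rpow_le_rpow_of_exponent_ge (by norm_num) (by norm_num) hα1.le
          linarith
      have hgl := hglobal z hz w hw hwz
      calc ‖g z - g w‖ ≤ (4+(m₀:ℝ))*M₀ := hgl
        _ = 8*(4+(m₀:ℝ))*M₀ * (1/8) := by ring
        _ ≤ 8*(4+(m₀:ℝ))*M₀ * (d^α + τ^(α/θ)) :=
            mul_le_mul_of_nonneg_left hlow (by positivity)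
        _ ≤ C' * (d^α + τ^(α/θ)) := by
            rw [hC']
            have h4 : (0:ℝ) ≤ 2*(2*K+6)*C := by positivity
            nlinarith [mul_nonneg h4 hrhs0]
  refine ⟨g, hdiff, C', hC'pos, fun z hz w hw => ?_⟩
  rcases le_total w.2 z.2 with h | h
  · exact hmain z hz w hw h
  · have := hmain w hw z hz h
    rw [norm_sub_rev, norm_sub_rev w.1, abs_sub_comm] at this
    exact this
end
end

section
/- Let n ≥ 1, β ∈ (0,1), a > 0, and let v ∈ ℝⁿ be a unit vector. Define the symmetric n×n matrix Z := a(I + (β−2) v⊗v) and set τ := 1/(2a). Then I − τZ is invertible, (I − τZ)^{−1} Z = 2a(I − 2((2−β)/(3−β)) v⊗v), and ⟨(I − τZ)^{−1} Z v, v⟩ = 2a(β−1)/(3−β) < 0. -/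
open Set Real Matrix

noncomputable section

/-- The matrix `Z := a (I + (β-2) v ⊗ v)` appearing in the Ishii–Lions doubling argument. -/
def Zmat (n : ℕ) (β a : ℝ) (v : Fin n → ℝ) : Matrix (Fin n) (Fin n) ℝ :=
  a • ((1 : Matrix (Fin n) (Fin n) ℝ) + (β - 2) • Matrix.vecMulVec v v)

lemma proj_mul_proj (n : ℕ) (v : Fin n → ℝ) (hv : ∑ i, v i ^ 2 = 1) :
    Matrix.vecMulVec v v * Matrix.vecMulVec v v = Matrix.vecMulVec v v := by
  ext i j
  simp only [Matrix.mul_apply, Matrix.vecMulVec_apply]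
  have : ∑ k, v i * v k * (v k * v j) = (v i * v j) * ∑ k, v k ^ 2 := by
    rw [Finset.mul_sum]; congr 1; ext k; ring
  rw [this, hv, mul_one]

lemma mul_expand (n : ℕ) (P : Matrix (Fin n) (Fin n) ℝ) (hP : P * P = P) (a b c d : ℝ) :
    (a • (1 : Matrix (Fin n) (Fin n) ℝ) + b • P) * (c • 1 + d • P) =
      (a * c) • 1 + (a * d + b * c + b * d) • P := by
  simp only [add_mul, mul_add, Matrix.smul_mul, Matrix.mul_smul, one_mul, mul_one, hP,
    smul_smul, add_smul]
  module

/-- **Sup-convolution regularization of the radial Hessian model.** For `β ∈ (0,1)`, `a > 0`,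
`v` a unit vector, `Z := a(I + (β-2) v⊗v)` and `τ := 1/(2a)`: `I - τZ` is invertible,
`(I - τZ)⁻¹ Z = 2a (I - 2((2-β)/(3-β)) v⊗v)`, and
`⟨(I - τZ)⁻¹ Z v, v⟩ = 2a(β-1)/(3-β) < 0`. -/
theorem sup_convolution_matrix
    (n : ℕ) (hn : 1 ≤ n) (β a : ℝ) (hβ : β ∈ Set.Ioo (0 : ℝ) 1) (ha : 0 < a)
    (v : Fin n → ℝ) (hv : ∑ i, v i ^ 2 = 1) :
    IsUnit (1 - (1 / (2 * a)) • Zmat n β a v) ∧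
    (1 - (1 / (2 * a)) • Zmat n β a v)⁻¹ * Zmat n β a v =
      (2 * a) • ((1 : Matrix (Fin n) (Fin n) ℝ)
        - (2 * ((2 - β) / (3 - β))) • Matrix.vecMulVec v v) ∧
    (((1 - (1 / (2 * a)) • Zmat n β a v)⁻¹ * Zmat n β a v).mulVec v) ⬝ᵥ v =
      2 * a * (β - 1) / (3 - β) ∧
    2 * a * (β - 1) / (3 - β) < 0 := by
  obtain ⟨hβ0, hβ1⟩ := hβ
  have ha' : a ≠ 0 := ne_of_gt ha
  have h3β : (3 : ℝ) - β ≠ 0 := by linarith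
  set P := Matrix.vecMulVec v v with hPdef
  have hP : P * P = P := proj_mul_proj n v hv
  -- rewrite A := 1 - τ Z in the form a•1 + b•P
  have hA : 1 - (1 / (2 * a)) • Zmat n β a v =
      (1 / 2 : ℝ) • (1 : Matrix (Fin n) (Fin n) ℝ) + ((2 - β) / 2) • P := by
    unfold Zmat
    rw [smul_smul]
    have : 1 / (2 * a) * a = 1 / 2 := by field_simp
    rw [this, smul_add, smul_smul, ← hPdef]
    module
  have hZ : Zmat n β a v = a • (1 : Matrix (Fin n) (Fin n) ℝ) + (a * (β - 2)) • P := by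
    unfold Zmat
    rw [smul_add, smul_smul, ← hPdef]
  set B : Matrix (Fin n) (Fin n) ℝ :=
    (2 : ℝ) • 1 + (-(2 * (2 - β) / (3 - β))) • P with hB
  have hAB : (1 - (1 / (2 * a)) • Zmat n β a v) * B = 1 := by
    rw [hA, hB, mul_expand n P hP]
    have h1 : (1 / 2 : ℝ) * 2 = 1 := by norm_num
    have h2 : (1/2 : ℝ) * (-(2 * (2 - β) / (3 - β))) + (2 - β) / 2 * 2 +
        (2 - β) / 2 * (-(2 * (2 - β) / (3 - β))) = 0 := by field_simp; ring
    rw [h1, h2, one_smul, zero_smul, add_zero]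
  have hBA : B * (1 - (1 / (2 * a)) • Zmat n β a v) = 1 := by
    rw [hA, hB, mul_expand n P hP]
    have h1 : (2 : ℝ) * (1/2) = 1 := by norm_num
    have h2 : (2 : ℝ) * ((2 - β) / 2) + (-(2 * (2 - β) / (3 - β))) * (1/2) +
        (-(2 * (2 - β) / (3 - β))) * ((2 - β) / 2) = 0 := by field_simp; ring
    rw [h1, h2, one_smul, zero_smul, add_zero]
  have hUnit : IsUnit (1 - (1 / (2 * a)) • Zmat n β a v) :=
    ⟨⟨_, B, hAB, hBA⟩, rfl⟩
  have hInv : (1 - (1 / (2 * a)) • Zmat n β a v)⁻¹ = B :=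
    Matrix.inv_eq_right_inv hAB
  have hmain : (1 - (1 / (2 * a)) • Zmat n β a v)⁻¹ * Zmat n β a v =
      (2 * a) • ((1 : Matrix (Fin n) (Fin n) ℝ)
        - (2 * ((2 - β) / (3 - β))) • P) := by
    rw [hInv, hZ, hB, mul_expand n P hP]
    rw [smul_sub, smul_smul]
    have h1 : (2 : ℝ) * a = 2 * a := rfl
    have h2 : (2 : ℝ) * (a * (β - 2)) + (-(2 * (2 - β) / (3 - β))) * a +
        (-(2 * (2 - β) / (3 - β))) * (a * (β - 2)) = -(2 * a * (2 * ((2 - β) / (3 - β)))) := by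
      field_simp; ring
    rw [h2, neg_smul, ← sub_eq_add_neg]
  refine ⟨hUnit, hmain, ?_, ?_⟩
  · rw [hmain]
    have hvv : v ⬝ᵥ v = 1 := by simpa [dotProduct, sq] using hv
    have hPv : P.mulVec v = v := by
      ext i
      simp only [hPdef, Matrix.mulVec, dotProduct, Matrix.vecMulVec_apply]
      have : ∑ k, v i * v k * v k = v i * ∑ k, v k ^ 2 := by
        rw [Finset.mul_sum]; congr 1; ext k; ring
      rw [this, hv, mul_one]
    rw [Matrix.smul_mulVec, Matrix.sub_mulVec, Matrix.smul_mulVec,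
      Matrix.one_mulVec, hPv, smul_dotProduct, sub_dotProduct, smul_dotProduct, hvv]
    field_simp
    linear_combination (4 * a * (β - 2)) * inv_mul_cancel₀ h3β
  · apply div_neg_of_neg_of_pos
    · nlinarith
    · linarith
end
end
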